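/- Let a ∈ [0,1], let Φ_a : M₂(ℂ) → M₂(ℂ) be the dephasing channel, let H = σ₃ and E ∈ [−1,0], and write |E| = −E. Then for every δ with 1 − |E| ≤ δ ≤ √(2(1 − |E|)), the Dobrushin curve of Φ_a satisfies F_E(δ) ≥ g_E(δ), where g_E(δ) = √(a²(δ² − (1−|E|)²) + (1−|E|)²). (Explicitly, with x = √(δ² − (1−|E|)²), the states with Bloch vectors (x,0,−|E|) and (0,0,−1) both lie in G_E, are at trace distance δ, and are mapped by Φ_a to states at trace distance g_E(δ).) -/

import Mathlib

open scoped ComplexOrder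

/-- The trace norm `‖A‖₁ = tr √(A†A)` of a complex matrix. -/
noncomputable def traceNorm {d : ℕ} (A : Matrix (Fin d) (Fin d) ℂ) : ℝ :=
  (((Matrix.posSemidef_conjTranspose_mul_self A).1.eigenvectorUnitary :
      Matrix (Fin d) (Fin d) ℂ) *
    Matrix.diagonal (((↑) : ℝ → ℂ) ∘ (√·) ∘
      (Matrix.posSemidef_conjTranspose_mul_self A).1.eigenvalues) *
    (star (Matrix.posSemidef_conjTranspose_mul_self A).1.eigenvectorUnitary :
      Matrix (Fin d) (Fin d) ℂ)).trace.re

/-- A density matrix: positive semidefinite with unit trace. -/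
def IsDensity {d : ℕ} (ρ : Matrix (Fin d) (Fin d) ℂ) : Prop :=
  ρ.PosSemidef ∧ ρ.trace = 1

/-- The Pauli matrix `σ₁`. -/
def pauli1 : Matrix (Fin 2) (Fin 2) ℂ := !![0, 1; 1, 0]

/-- The Pauli matrix `σ₂`. -/
def pauli2 : Matrix (Fin 2) (Fin 2) ℂ := !![0, -Complex.I; Complex.I, 0]

/-- The Pauli matrix `σ₃`. -/
def pauli3 : Matrix (Fin 2) (Fin 2) ℂ := !![1, 0; 0, -1]

/-- The dephasing channel with parameter `a`: the (complex-linear) map acting on the Pauli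
basis by `α₀I + α₁σ₁ + α₂σ₂ + α₃σ₃ ↦ α₀I + a(α₁σ₁ + α₂σ₂) + α₃σ₃`. -/
def IsDephasing (a : ℝ) (Φ : Matrix (Fin 2) (Fin 2) ℂ →ₗ[ℂ] Matrix (Fin 2) (Fin 2) ℂ) : Prop :=
  ∀ α : Fin 4 → ℝ,
    Φ ((α 0 : ℂ) • 1 + (α 1 : ℂ) • pauli1 + (α 2 : ℂ) • pauli2 + (α 3 : ℂ) • pauli3) =
      (α 0 : ℂ) • 1 + ((a : ℂ) * (α 1 : ℂ)) • pauli1 + ((a : ℂ) * (α 2 : ℂ)) • pauli2 +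
        (α 3 : ℂ) • pauli3

/-- The qubit state with Bloch vector `(w₁, w₂, w₃)`: `ρ = ½(I + w₁σ₁ + w₂σ₂ + w₃σ₃)`. -/
noncomputable def blochState (w₁ w₂ w₃ : ℝ) : Matrix (Fin 2) (Fin 2) ℂ :=
  (1 / 2 : ℂ) • ((1 : Matrix (Fin 2) (Fin 2) ℂ) +
    (w₁ : ℂ) • pauli1 + (w₂ : ℂ) • pauli2 + (w₃ : ℂ) • pauli3)

/-- The Dobrushin curve `F_E(δ)` of a map `Φ` with respect to the Hamiltonian `H` and the
energy bound `E`. -/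
noncomputable def dobrushinCurve {d : ℕ}
    (Φ : Matrix (Fin d) (Fin d) ℂ → Matrix (Fin d) (Fin d) ℂ)
    (H : Matrix (Fin d) (Fin d) ℂ) (E δ : ℝ) : ℝ :=
  sSup {r | ∃ ρ₀ ρ₁ : Matrix (Fin d) (Fin d) ℂ, IsDensity ρ₀ ∧ IsDensity ρ₁ ∧
    ((ρ₀ * H).trace).re ≤ E ∧ ((ρ₁ * H).trace).re ≤ E ∧
    traceNorm (ρ₀ - ρ₁) ≤ δ ∧ r = traceNorm (Φ ρ₀ - Φ ρ₁)}

/-! ### Auxiliary lemmas -/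

lemma traceNorm_herm (t : ℝ) (s : ℂ) :
    traceNorm !![(t:ℂ), s; (starRingEnd ℂ) s, -t] = 2 * Real.sqrt (t^2 + Complex.normSq s) := by
  set A : Matrix (Fin 2) (Fin 2) ℂ := !![(t:ℂ), s; (starRingEnd ℂ) s, -t] with hA
  set c : ℝ := t^2 + Complex.normSq s with hc
  have hAA : A.conjTranspose * A = ((c : ℝ) : ℂ) • 1 := by
    ext i j
    fin_cases i <;> fin_cases j <;>
      simp [hA, hc, Matrix.mul_apply, Fin.sum_univ_two, Matrix.conjTranspose_apply,
        Complex.normSq_eq_conj_mul_self] <;> ring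
  have hcpos : (0:ℝ) ≤ c := by
    have := Complex.normSq_nonneg s
    nlinarith [sq_nonneg t]
  have hd : ((Real.sqrt c :ℂ)) • (1 : Matrix (Fin 2) (Fin 2) ℂ) =
      Matrix.diagonal (fun _ => (Real.sqrt c : ℂ)) := by
    ext i j; fin_cases i <;> fin_cases j <;> simp [Matrix.diagonal]
  have hpsd : Matrix.PosSemidef (((Real.sqrt c :ℂ)) • (1 : Matrix (Fin 2) (Fin 2) ℂ)) := by
    rw [hd]
    exact Matrix.PosSemidef.diagonal (fun i => by
      simpa using Complex.zero_le_real.mpr (Real.sqrt_nonneg c))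
  have hsq : (((Real.sqrt c :ℂ)) • (1 : Matrix (Fin 2) (Fin 2) ℂ)) ^ 2 = A.conjTranspose * A := by
    rw [smul_pow, one_pow, ← Complex.ofReal_pow, Real.sq_sqrt hcpos, hAA]
  have hB := (Matrix.posSemidef_conjTranspose_mul_self A).1.spectral_theorem
  rw [Unitary.conjStarAlgAut_apply] at hB
  unfold traceNorm
  generalize (Matrix.posSemidef_conjTranspose_mul_self A).1.eigenvectorUnitary = U at hB ⊢
  generalize (Matrix.posSemidef_conjTranspose_mul_self A).1.eigenvalues = ev at hB ⊢
  rw [hAA] at hB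
  have hUU : star (U : Matrix (Fin 2) (Fin 2) ℂ) * (U : Matrix (Fin 2) (Fin 2) ℂ) = 1 :=
    Unitary.star_mul_self_of_mem U.2
  have h2 : Matrix.diagonal (RCLike.ofReal ∘ ev) = ((c : ℝ) : ℂ) • (1 : Matrix (Fin 2) (Fin 2) ℂ) := by
    calc Matrix.diagonal (RCLike.ofReal ∘ ev)
        = (star (U : Matrix (Fin 2) (Fin 2) ℂ) * (U : Matrix (Fin 2) (Fin 2) ℂ)) *
            Matrix.diagonal (RCLike.ofReal ∘ ev) *
            (star (U : Matrix (Fin 2) (Fin 2) ℂ) * (U : Matrix (Fin 2) (Fin 2) ℂ)) := by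
          rw [hUU, one_mul, mul_one]
      _ = star (U : Matrix (Fin 2) (Fin 2) ℂ) *
            ((U : Matrix (Fin 2) (Fin 2) ℂ) * Matrix.diagonal (RCLike.ofReal ∘ ev) *
              star (U : Matrix (Fin 2) (Fin 2) ℂ)) * (U : Matrix (Fin 2) (Fin 2) ℂ) := by
          simp only [mul_assoc]
      _ = ((c : ℝ) : ℂ) • (1 : Matrix (Fin 2) (Fin 2) ℂ) := by
          rw [← hB]; simp [hUU]
  have hev : ∀ i, ev i = c := by
    intro i
    have := congrArg (fun M => M i i) h2
    simp at this
    exact_mod_cast this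
  rw [Matrix.trace_mul_comm, ← mul_assoc, hUU, one_mul]
  simp only [Matrix.trace, Matrix.diag, Matrix.diagonal_apply_eq, Fin.sum_univ_two,
    Function.comp, hev, Complex.add_re, Complex.ofReal_re]
  ring

lemma traceNorm_real (t s : ℝ) :
    traceNorm !![(t:ℂ), (s:ℂ); (s:ℂ), -(t:ℂ)] = 2 * Real.sqrt (t^2 + s^2) := by
  have hm : !![(t:ℂ), (s:ℂ); (starRingEnd ℂ) (s:ℂ), -(t:ℂ)] =
      !![(t:ℂ), (s:ℂ); (s:ℂ), -(t:ℂ)] := by rw [Complex.conj_ofReal]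
  have := traceNorm_herm t (s:ℂ)
  rw [hm] at this
  rw [this, Complex.normSq_ofReal, ← sq]

lemma two_sqrt_eq (t s c : ℝ) (hc : 0 ≤ c) (h : 4*(t^2+s^2) = c^2) :
    2 * Real.sqrt (t^2+s^2) = c := by
  have h2 : t^2+s^2 = (c/2)^2 := by nlinarith
  rw [h2, Real.sqrt_sq (by linarith)]; ring

lemma blochState_eq' (w₁ w₃ : ℝ) :
    blochState w₁ 0 w₃ = !![((1+w₃)/2 : ℂ), (w₁:ℂ)/2; (w₁:ℂ)/2, (1-w₃)/2] := by
  unfold blochState pauli1 pauli2 pauli3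
  ext i j; fin_cases i <;> fin_cases j <;> simp <;> ring

lemma density_bloch (w₁ w₃ : ℝ) (h : w₁^2 + w₃^2 ≤ 1) :
    IsDensity (blochState w₁ 0 w₃) := by
  rw [blochState_eq']
  constructor
  · refine Matrix.PosSemidef.of_dotProduct_mulVec_nonneg ?_ ?_
    · ext i j; fin_cases i <;> fin_cases j <;>
        simp [Matrix.conjTranspose_apply, Complex.ext_iff]
    · intro x
      have hx : dotProduct (star x)
          (Matrix.mulVec !![((1+w₃)/2 : ℂ), (w₁:ℂ)/2; (w₁:ℂ)/2, (1-w₃)/2] x) =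
          (starRingEnd ℂ) (x 0) * (((1+w₃)/2) * x 0 + (w₁/2) * x 1) +
          (starRingEnd ℂ) (x 1) * ((w₁/2) * x 0 + ((1-w₃)/2) * x 1) := by
        simp [dotProduct, Matrix.mulVec, Fin.sum_univ_two]
      rw [hx, Complex.le_def]
      obtain ⟨p, q⟩ := x 0
      obtain ⟨u, v⟩ := x 1
      constructor
      · simp [Complex.add_re, Complex.mul_re, Complex.ext_iff]
        nlinarith [sq_nonneg (w₁*p - w₃*u + u), sq_nonneg (w₁*q - w₃*v + v),
          sq_nonneg (w₁*u + w₃*p + p), sq_nonneg (w₁*v + w₃*q + q),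
          sq_nonneg (p - u), sq_nonneg (q - v), sq_nonneg (p+u), sq_nonneg (q+v),
          sq_nonneg p, sq_nonneg q, sq_nonneg u, sq_nonneg v]
      · simp [Complex.ext_iff]
        ring
  · rw [Matrix.trace_fin_two]
    simp
    ring

lemma trace_pauli3 (w₁ w₃ : ℝ) :
    ((blochState w₁ 0 w₃ * pauli3).trace).re = w₃ := by
  rw [blochState_eq']
  unfold pauli3
  rw [Matrix.trace_fin_two]
  simp [Matrix.mul_apply, Fin.sum_univ_two]
  ring

lemma pauli_decomp (M : Matrix (Fin 2) (Fin 2) ℂ) :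
    M = ((M 0 0 + M 1 1)/2) • 1 + ((M 0 1 + M 1 0)/2) • pauli1 +
      ((M 0 1 - M 1 0)*Complex.I/2) • pauli2 + ((M 0 0 - M 1 1)/2) • pauli3 := by
  unfold pauli1 pauli2 pauli3
  ext i j; fin_cases i <;> fin_cases j <;>
    simp <;> ring_nf <;> simp [Complex.I_sq] <;> ring

lemma dephasing_apply {a : ℝ} {Φ : Matrix (Fin 2) (Fin 2) ℂ →ₗ[ℂ] Matrix (Fin 2) (Fin 2) ℂ}
    (hΦ : IsDephasing a Φ) (M : Matrix (Fin 2) (Fin 2) ℂ) :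
    Φ M = !![M 0 0, a * M 0 1; a * M 1 0, M 1 1] := by
  have h1 : Φ 1 = 1 := by simpa using hΦ ![1,0,0,0]
  have hp1 : Φ pauli1 = (a:ℂ) • pauli1 := by simpa using hΦ ![0,1,0,0]
  have hp2 : Φ pauli2 = (a:ℂ) • pauli2 := by simpa using hΦ ![0,0,1,0]
  have hp3 : Φ pauli3 = pauli3 := by simpa using hΦ ![0,0,0,1]
  conv_lhs => rw [pauli_decomp M]
  simp only [map_add, map_smul, h1, hp1, hp2, hp3]
  unfold pauli1 pauli2 pauli3
  ext i j; fin_cases i <;> fin_cases j <;>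
    simp <;> ring_nf <;> simp [Complex.I_sq] <;> ring

lemma density_entries (ρ : Matrix (Fin 2) (Fin 2) ℂ) (h : IsDensity ρ) :
    ∃ (p : ℝ) (q : ℂ), ρ = !![(p:ℂ), q; (starRingEnd ℂ) q, 1-p] ∧
      0 ≤ p ∧ p ≤ 1 ∧ Complex.normSq q ≤ 1 := by
  obtain ⟨hpsd, htr⟩ := h
  obtain ⟨hherm, hquad⟩ := Matrix.posSemidef_iff_dotProduct_mulVec.mp hpsd
  have h00 : ρ 0 0 = (starRingEnd ℂ) (ρ 0 0) := by
    conv_lhs => rw [← hherm]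
    simp [Matrix.conjTranspose_apply]
  have h11 : ρ 1 1 = (starRingEnd ℂ) (ρ 1 1) := by
    conv_lhs => rw [← hherm]
    simp [Matrix.conjTranspose_apply]
  have h10 : ρ 1 0 = (starRingEnd ℂ) (ρ 0 1) := by
    conv_lhs => rw [← hherm]
    simp [Matrix.conjTranspose_apply]
  have him0 : (ρ 0 0).im = 0 := by
    have := congrArg Complex.im h00; simpa using by linarith [this, Complex.conj_im (ρ 0 0)]
  have him1 : (ρ 1 1).im = 0 := by
    have := congrArg Complex.im h11; simpa using by linarith [this, Complex.conj_im (ρ 1 1)]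
  set p := (ρ 0 0).re with hp
  set q := ρ 0 1 with hq
  have htr' : (ρ 0 0) + (ρ 1 1) = 1 := by
    rw [Matrix.trace_fin_two] at htr; exact htr
  have h11v : ρ 1 1 = (1 - p : ℝ) := by
    rw [Complex.ext_iff]
    constructor
    · have := congrArg Complex.re htr'; simp at this; simp [hp]; linarith
    · simp [him1]
  have h00v : ρ 0 0 = (p : ℝ) := by
    rw [Complex.ext_iff]; constructor
    · simp [hp]
    · simp [him0]
  have hρ : ρ = !![(p:ℂ), q; (starRingEnd ℂ) q, 1-p] := by
    ext i j; fin_cases i <;> fin_cases j <;>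
      simp [h00v, h11v, h10, hq]
  have hd0 : (0:ℂ) ≤ ρ 0 0 := by
    have := hquad (Pi.single 0 1)
    simpa [dotProduct, Matrix.mulVec, Fin.sum_univ_two, Pi.single] using this
  have hd1 : (0:ℂ) ≤ ρ 1 1 := by
    have := hquad (Pi.single 1 1)
    simpa [dotProduct, Matrix.mulVec, Fin.sum_univ_two, Pi.single] using this
  have hp0 : 0 ≤ p := by
    have := (Complex.le_def.mp hd0).1; simpa [hp] using this
  have hp1 : p ≤ 1 := by
    have := (Complex.le_def.mp hd1).1
    rw [h11v] at this; simp at this; linarith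
  have hv1 := hquad ![-q, (p:ℂ)]
  have hv2 := hquad ![(1-p:ℂ), -((starRingEnd ℂ) q)]
  rw [hρ] at hv1 hv2
  have e1 : dotProduct (star ![-q, (p:ℂ)])
      (Matrix.mulVec !![(p:ℂ), q; (starRingEnd ℂ) q, 1-p] ![-q, (p:ℂ)]) =
      ((p * (p*(1-p) - Complex.normSq q) : ℝ) : ℂ) := by
    simp [dotProduct, Matrix.mulVec, Fin.sum_univ_two,
      Complex.normSq_eq_conj_mul_self]
    ring
  have e2 : dotProduct (star ![(1-p:ℂ), -((starRingEnd ℂ) q)])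
      (Matrix.mulVec !![(p:ℂ), q; (starRingEnd ℂ) q, 1-p] ![(1-p:ℂ), -((starRingEnd ℂ) q)]) =
      (((1-p) * (p*(1-p) - Complex.normSq q) : ℝ) : ℂ) := by
    simp [dotProduct, Matrix.mulVec, Fin.sum_univ_two,
      Complex.normSq_eq_conj_mul_self]
    ring
  rw [e1] at hv1; rw [e2] at hv2
  have r1 : 0 ≤ p * (p*(1-p) - Complex.normSq q) := by
    have := (Complex.le_def.mp hv1).1; simpa using this
  have r2 : 0 ≤ (1-p) * (p*(1-p) - Complex.normSq q) := by
    have := (Complex.le_def.mp hv2).1; simpa using this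
  have hqb : Complex.normSq q ≤ p * (1-p) := by nlinarith
  exact ⟨p, q, hρ, hp0, hp1, by nlinarith⟩

set_option maxHeartbeats 1000000 in
/-- Regime II lower bound for the Dobrushin curve of the dephasing channel with `H = σ₃`,
`E ∈ [−1,0]` and `1 − |E| ≤ δ ≤ √(2(1 − |E|))`: with `x = √(δ² − (1−|E|)²)`, the states
with Bloch vectors `(x,0,−|E|)` and `(0,0,−1)` lie in `G_E`, are at trace distance `δ`,
are mapped to states at trace distance `g_E(δ) = √(a²(δ² − (1−|E|)²) + (1−|E|)²)`, and hence
`F_E(δ) ≥ g_E(δ)`. -/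
theorem stmt_15 (a : ℝ) (ha : a ∈ Set.Icc (0 : ℝ) 1)
    (Φ : Matrix (Fin 2) (Fin 2) ℂ →ₗ[ℂ] Matrix (Fin 2) (Fin 2) ℂ) (hΦ : IsDephasing a Φ)
    (E : ℝ) (hE : E ∈ Set.Icc (-1 : ℝ) 0)
    (δ : ℝ) (hδ0 : 1 - (-E) ≤ δ) (hδ1 : δ ≤ Real.sqrt (2 * (1 - (-E)))) :
    IsDensity (blochState (Real.sqrt (δ ^ 2 - (1 - (-E)) ^ 2)) 0 (-(-E))) ∧
    IsDensity (blochState 0 0 (-1)) ∧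
    ((blochState (Real.sqrt (δ ^ 2 - (1 - (-E)) ^ 2)) 0 (-(-E)) * pauli3).trace).re ≤ E ∧
    ((blochState 0 0 (-1) * pauli3).trace).re ≤ E ∧
    traceNorm (blochState (Real.sqrt (δ ^ 2 - (1 - (-E)) ^ 2)) 0 (-(-E)) -
      blochState 0 0 (-1)) = δ ∧
    traceNorm (Φ (blochState (Real.sqrt (δ ^ 2 - (1 - (-E)) ^ 2)) 0 (-(-E))) -
      Φ (blochState 0 0 (-1))) =
        Real.sqrt (a ^ 2 * (δ ^ 2 - (1 - (-E)) ^ 2) + (1 - (-E)) ^ 2) ∧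
    Real.sqrt (a ^ 2 * (δ ^ 2 - (1 - (-E)) ^ 2) + (1 - (-E)) ^ 2) ≤
      dobrushinCurve (⇑Φ) pauli3 E δ := by
  obtain ⟨ha0, ha1⟩ := ha
  obtain ⟨hE0, hE1⟩ := hE
  simp only [neg_neg, sub_neg_eq_add] at hδ0 hδ1 ⊢
  set x : ℝ := Real.sqrt (δ ^ 2 - (1 + E) ^ 2) with hxdef
  have h1E : 0 ≤ 1 + E := by linarith
  have hδnn : 0 ≤ δ := by linarith
  have hδsq : δ^2 ≤ 2*(1+E) := by
    have := Real.sq_sqrt (by linarith : (0:ℝ) ≤ 2*(1+E))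
    nlinarith [pow_le_pow_left₀ hδnn hδ1 2]
  have hge : (1+E)^2 ≤ δ^2 := by nlinarith
  have hx2 : x^2 = δ^2 - (1+E)^2 := Real.sq_sqrt (by linarith)
  have hxnn : 0 ≤ x := Real.sqrt_nonneg _
  -- densities
  have hd0 : IsDensity (blochState x 0 E) := density_bloch x E (by nlinarith)
  have hd1 : IsDensity (blochState 0 0 (-1)) := density_bloch 0 (-1) (by norm_num)
  -- energies
  have hen0 : ((blochState x 0 E * pauli3).trace).re ≤ E := le_of_eq (trace_pauli3 x E)
  have hen1 : ((blochState 0 0 (-1) * pauli3).trace).re ≤ E := by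
    rw [trace_pauli3]; linarith
  -- difference of states
  have hdiff : blochState x 0 E - blochState 0 0 (-1) =
      !![(((1+E)/2 : ℝ) : ℂ), (((x/2 : ℝ)) : ℂ); (((x/2 : ℝ)) : ℂ), -(((1+E)/2 : ℝ) : ℂ)] := by
    rw [blochState_eq', blochState_eq']
    ext i j; fin_cases i <;> fin_cases j <;> (push_cast; simp) <;> ring
  have htn1 : traceNorm (blochState x 0 E - blochState 0 0 (-1)) = δ := by
    rw [hdiff, traceNorm_real]
    exact two_sqrt_eq _ _ _ hδnn (by nlinarith)
  -- difference of images
  have hgnn : 0 ≤ a ^ 2 * (δ ^ 2 - (1 + E) ^ 2) + (1 + E) ^ 2 := by nlinarith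
  have hg2 : (Real.sqrt (a ^ 2 * (δ ^ 2 - (1 + E) ^ 2) + (1 + E) ^ 2))^2 =
      a ^ 2 * (δ ^ 2 - (1 + E) ^ 2) + (1 + E) ^ 2 := Real.sq_sqrt hgnn
  have hΦdiff : Φ (blochState x 0 E) - Φ (blochState 0 0 (-1)) =
      !![(((1+E)/2 : ℝ) : ℂ), (((a*x/2 : ℝ)) : ℂ); (((a*x/2 : ℝ)) : ℂ), -(((1+E)/2 : ℝ) : ℂ)] := by
    rw [blochState_eq', blochState_eq', dephasing_apply hΦ, dephasing_apply hΦ]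
    ext i j; fin_cases i <;> fin_cases j <;> (push_cast; simp) <;> ring
  have htn2 : traceNorm (Φ (blochState x 0 E) - Φ (blochState 0 0 (-1))) =
      Real.sqrt (a ^ 2 * (δ ^ 2 - (1 + E) ^ 2) + (1 + E) ^ 2) := by
    rw [hΦdiff, traceNorm_real]
    exact two_sqrt_eq _ _ _ (Real.sqrt_nonneg _) (by nlinarith)
  refine ⟨hd0, hd1, hen0, hen1, htn1, htn2, ?_⟩
  -- the Dobrushin curve bound
  apply le_csSup
  · refine ⟨6, fun r hr => ?_⟩
    obtain ⟨ρ₀, ρ₁, hρ₀, hρ₁, -, -, -, hreq⟩ := hr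
    obtain ⟨p₀, q₀, hm₀, hp₀0, hp₀1, hq₀⟩ := density_entries ρ₀ hρ₀
    obtain ⟨p₁, q₁, hm₁, hp₁0, hp₁1, hq₁⟩ := density_entries ρ₁ hρ₁
    have hD : Φ ρ₀ - Φ ρ₁ =
        !![(((p₀ - p₁ : ℝ)) : ℂ), (a:ℂ)*(q₀ - q₁);
           (starRingEnd ℂ) ((a:ℂ)*(q₀ - q₁)), -(((p₀ - p₁ : ℝ)) : ℂ)] := by
      rw [dephasing_apply hΦ, dephasing_apply hΦ, hm₀, hm₁]
      ext i j; fin_cases i <;> fin_cases j <;>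
        simp [map_mul, Complex.conj_ofReal] <;> push_cast <;> ring
    rw [hreq, hD, traceNorm_herm]
    have hb : (p₀ - p₁)^2 + Complex.normSq ((a:ℂ)*(q₀ - q₁)) ≤ 9 := by
      rw [map_mul, Complex.normSq_ofReal]
      have hsub : Complex.normSq (q₀ - q₁) ≤ 2*(Complex.normSq q₀ + Complex.normSq q₁) := by
        simp only [Complex.normSq_apply, Complex.sub_re, Complex.sub_im]
        nlinarith [sq_nonneg (q₀.re + q₁.re), sq_nonneg (q₀.im + q₁.im)]
      nlinarith [Complex.normSq_nonneg (q₀ - q₁)]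
    calc 2 * Real.sqrt ((p₀ - p₁)^2 + Complex.normSq ((a:ℂ)*(q₀ - q₁)))
        ≤ 2 * Real.sqrt 9 := by
          have := Real.sqrt_le_sqrt hb
          linarith
      _ = 6 := by
          rw [show (9:ℝ) = 3^2 by norm_num, Real.sqrt_sq (by norm_num)]; norm_num
  · exact ⟨blochState x 0 E, blochState 0 0 (-1), hd0, hd1, hen0, hen1,
      le_of_eq htn1, htn2.symm⟩
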